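/- For real numbers x, y, z with 0 < x < y < z < 1 and any positive reals μ, M, m, the equation −(1−z²)z/(1+z²)⁴ + (1/2)(x²+1)²[1/((xz+1)²(x−z)²) + 1/((z+x)²(xz−1)²)] = −(1/2)μ/z² − (1/2)(y²+1)²M[1/((yz+1)²(y−z)²) + 1/((z+y)²(yz−1)²)] − (1/8)(z²+1)²m/((z²−1)²z²) has no solution. -/

import Mathlib

set_option maxHeartbeats 1600000 in
theorem stmt_15 (x y z μ M m : ℝ) (hx : 0 < x) (hxy : x < y) (hyz : y < z)
    (hz : z < 1) (hμ : 0 < μ) (hM : 0 < M) (hm : 0 < m) :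
    -((1-z^2)*z)/(1+z^2)^4
        + (1/2)*(x^2+1)^2 * (1/((x*z+1)^2*(x-z)^2) + 1/((z+x)^2*(x*z-1)^2))
      ≠ -(1/2)*μ/z^2
          - (1/2)*(y^2+1)^2*M * (1/((y*z+1)^2*(y-z)^2) + 1/((z+y)^2*(y*z-1)^2))
          - (1/8)*(z^2+1)^2*m/((z^2-1)^2*z^2) := by
  have hxz : x < z := hxy.trans hyz
  have hz0 : 0 < z := hx.trans hxz
  have hy0 : 0 < y := hx.trans hxy
  have hy1 : y < 1 := hyz.trans hz
  have hx1 : x < 1 := hxz.trans hz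
  have hxzne : x - z ≠ 0 := sub_ne_zero.mpr (ne_of_lt hxz)
  have hyzne : y - z ≠ 0 := sub_ne_zero.mpr (ne_of_lt hyz)
  have hxz1 : x * z < 1 := by nlinarith
  have hyz1 : y * z < 1 := by nlinarith
  have hxz1ne : x * z - 1 ≠ 0 := sub_ne_zero.mpr (ne_of_lt hxz1)
  have hyz1ne : y * z - 1 ≠ 0 := sub_ne_zero.mpr (ne_of_lt hyz1)
  have hz1ne : z ^ 2 - 1 ≠ 0 := sub_ne_zero.mpr (by nlinarith)
  have d1 : 0 < (x*z+1)^2*(x-z)^2 := by positivity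
  have d2 : 0 < (z+x)^2*(x*z-1)^2 := by positivity
  have d3 : 0 < (y*z+1)^2*(y-z)^2 := by positivity
  have d4 : 0 < (z+y)^2*(y*z-1)^2 := by positivity
  -- RHS is negative
  have hR1 : 0 < (1/2)*μ/z^2 := by positivity
  have hR2 : 0 < (1/2)*(y^2+1)^2*M * (1/((y*z+1)^2*(y-z)^2) + 1/((z+y)^2*(y*z-1)^2)) := by
    positivity
  have hR3 : 0 < (1/8)*(z^2+1)^2*m/((z^2-1)^2*z^2) := by positivity
  -- LHS is positive
  have hT1 : 0 < (1/2)*(x^2+1)^2 * (1/((x*z+1)^2*(x-z)^2)) := by positivity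
  have key : (1-z^2)*z/(1+z^2)^4 ≤ (1/2)*(x^2+1)^2 * (1/((z+x)^2*(x*z-1)^2)) := by
    rw [mul_one_div, div_le_div_iff₀ (by positivity) d2]
    have e1 : (z+x)^2 ≤ (x^2+1)*(z^2+1) := by linarith [sq_nonneg (x*z-1)]
    have e2 : (x*z-1)^2 ≤ (x^2+1)*(z^2+1) := by linarith [sq_nonneg (z+x)]
    have h1 : (z+x)^2*(x*z-1)^2 ≤ ((x^2+1)*(z^2+1))*((x^2+1)*(z^2+1)) :=
      mul_le_mul e1 e2 (sq_nonneg _) (by positivity)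
    have h2' : 2*((1-z^2)*z) ≤ (1+z^2)^2 := by
      linarith [sq_nonneg (1 - z), sq_nonneg (z + z^2)]
    have hnn : 0 ≤ (1-z^2)*z :=
      mul_nonneg (sub_nonneg.mpr (pow_le_one₀ hz0.le hz.le : z^2 ≤ 1)) hz0.le
    calc (1-z^2)*z * ((z+x)^2*(x*z-1)^2)
        ≤ (1-z^2)*z * (((x^2+1)*(z^2+1))*((x^2+1)*(z^2+1))) :=
          mul_le_mul_of_nonneg_left h1 hnn
      _ ≤ ((1/2)*(1+z^2)^2) * (((x^2+1)*(z^2+1))*((x^2+1)*(z^2+1))) := by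
          apply mul_le_mul_of_nonneg_right _ (by positivity)
          linarith
      _ = (1/2)*(x^2+1)^2*(1+z^2)^4 := by ring
  intro h
  have hLHS : 0 < -((1-z^2)*z)/(1+z^2)^4
      + (1/2)*(x^2+1)^2 * (1/((x*z+1)^2*(x-z)^2) + 1/((z+x)^2*(x*z-1)^2)) := by
    have : -((1-z^2)*z)/(1+z^2)^4 = -((1-z^2)*z/(1+z^2)^4) := by ring
    rw [this, mul_add]
    linarith
  ring_nf at h hR1 hR2 hR3 hLHS
  linarith
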